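/- arXiv:2312.09914 — 2 statements merged into one kernel-verified Lean document; each statement's English description precedes it below -/
import Mathlib

section
/- Let (W,+) be a commutative semigroup, A an ideal of (W,+), and e ∈ P(A). Then W(e)\A with the operation + is a group (closed under +, with a two-sided identity and inverses) if and only if W(e) ∩ A = W(e) ∩ ⋃_{f ∈ P(A)} (W(f) \ H(f)). -/
open Pointwise

/-- Principal left ideal W_L(u) = (W + {u}) ∪ {u}. -/
def WLset {W : Type*} [AddSemigroup W] (u : W) : Set W :=
  ((Set.univ : Set W) + ({u} : Set W)) ∪ {u}

/-- Principal right ideal W_R(u) = ({u} + W) ∪ {u}. -/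
def WRset {W : Type*} [AddSemigroup W] (u : W) : Set W :=
  (({u} : Set W) + (Set.univ : Set W)) ∪ {u}

/-- Principal two-sided ideal W(u) = (W_L(u) + W) ∪ W_L(u). -/
def WIset {W : Type*} [AddSemigroup W] (u : W) : Set W :=
  (WLset u + (Set.univ : Set W)) ∪ WLset u

/-- Green L-class. -/
def Lclass {W : Type*} [AddSemigroup W] (u : W) : Set W := {v | WLset u = WLset v}

/-- Green R-class. -/
def Rclass {W : Type*} [AddSemigroup W] (u : W) : Set W := {v | WRset u = WRset v}

/-- Green H-class. -/
def Hclass {W : Type*} [AddSemigroup W] (u : W) : Set W :=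
  {v | WLset u = WLset v ∧ WRset u = WRset v}

def IsLeftIdealSG {W : Type*} [AddSemigroup W] (A : Set W) : Prop :=
  (Set.univ : Set W) + A ⊆ A

def IsRightIdealSG {W : Type*} [AddSemigroup W] (A : Set W) : Prop :=
  A + (Set.univ : Set W) ⊆ A

def IsIdealSG {W : Type*} [AddSemigroup W] (A : Set W) : Prop :=
  IsLeftIdealSG A ∧ IsRightIdealSG A

/-- The set E(W) of idempotents. -/
def Eset (W : Type*) [AddSemigroup W] : Set W := {e | e + e = e}

/-- The Rees order: f ≤_H e iff e + f = f + e = f. -/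
def ReesLE {W : Type*} [AddSemigroup W] (f e : W) : Prop := e + f = f ∧ f + e = f

/-- E^≤(e) = {f ∈ E(W) | f ≤_H e}. -/
def Ele {W : Type*} [AddSemigroup W] (e : W) : Set W := {f ∈ Eset W | ReesLE f e}

/-- E^lin(W): idempotents α such that ≤_H is a total order on E^≤(α). -/
def Elin (W : Type*) [AddSemigroup W] : Set W :=
  {α ∈ Eset W | ∀ f ∈ Ele α, ∀ g ∈ Ele α, ReesLE f g ∨ ReesLE g f}

def Afin (W : Type*) [AddSemigroup W] : Set W :=
  {α ∈ Elin W | (Ele α).Finite ∧ ∀ w ∉ Ele α, w + α = α ∧ α + w = α}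

/-- The set A(W) of quasi-absorbing elements. -/
def AW (W : Type*) [AddSemigroup W] : Set W :=
  {α ∈ Elin W | ∀ w ∉ Ele α, w + α = α ∧ α + w = α}

/-- Ā_n = ⋃_{i=1}^n A_i. -/
def Abar (W : Type*) [AddSemigroup W] : ℕ → Set W
  | 0 => ∅
  | n + 1 => Abar W n ∪ {α | α ∉ Abar W n ∧ ∀ w ∉ Abar W n, w + α = α ∧ α + w = α}

/-- The sets A_n from the stepwise construction. -/
def Astep (W : Type*) [AddSemigroup W] : ℕ → Set W
  | 0 => ∅
  | n + 1 => {α | α ∉ Abar W n ∧ ∀ w ∉ Abar W n, w + α = α ∧ α + w = α}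

/-- The set A_s(W) of stepwise quasi-absorbing elements. -/
def As (W : Type*) [AddSemigroup W] : Set W := {α | ∃ n, α ∈ Astep W n}

/-- The set P(A) of A-primitive idempotents. -/
def Pset {W : Type*} [AddSemigroup W] (A : Set W) : Set W :=
  {e | e ∈ Eset W \ A ∧ ∀ f ∈ Eset W, ReesLE f e → f = e ∨ f ∈ A}

/-- G ⊆ W is a group under +: closed, with a two-sided identity and inverses. -/
def IsGroupOn {W : Type*} [AddSemigroup W] (G : Set W) : Prop :=
  (∀ a ∈ G, ∀ b ∈ G, a + b ∈ G) ∧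
  ∃ e ∈ G, (∀ a ∈ G, a + e = a ∧ e + a = a) ∧
    ∀ a ∈ G, ∃ b ∈ G, a + b = e ∧ b + a = e

/-- D is an A-minimal ideal. -/
def IsMinimalIdealRel {W : Type*} [AddSemigroup W] (A D : Set W) : Prop :=
  IsIdealSG D ∧ ¬ D ⊆ A ∧ ∀ E : Set W, IsIdealSG E → E ⊂ D → E ⊆ A

/-- D is an ideal of the subsemigroup (V,+). -/
def IsIdealIn {W : Type*} [AddSemigroup W] (V D : Set W) : Prop :=
  D ⊆ V ∧ V + D ⊆ D ∧ D + V ⊆ D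

/-- The subsemigroup (V,+) is A-simple. -/
def IsSimpleRel {W : Type*} [AddSemigroup W] (V A : Set W) : Prop :=
  A ⊂ V ∧ ∀ D : Set W, IsIdealIn V D → D = V ∨ D ⊆ A

/-- A bottleneck ideal. -/
def IsBottleneck {W : Type*} [AddSemigroup W] (A : Set W) : Prop :=
  IsIdealSG A ∧ ∀ D : Set W, IsIdealSG D → D ⊆ A ∨ A ⊆ D

section Aux
variable {W : Type*} [AddCommSemigroup W]

lemma mem_WLset {u a : W} : a ∈ WLset u ↔ a = u ∨ ∃ w, w + u = a := by
  simp [WLset, Set.mem_add]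

lemma mem_WIset {u a : W} : a ∈ WIset u ↔ a = u ∨ ∃ w, w + u = a := by
  constructor
  · intro h
    rcases h with h | h
    · obtain ⟨b, hb, c, -, rfl⟩ := h
      rcases mem_WLset.1 hb with h1 | ⟨w, h1⟩
      · exact Or.inr ⟨c, by rw [h1, add_comm]⟩
      · exact Or.inr ⟨w + c, by rw [← h1, add_right_comm]⟩
    · exact mem_WLset.1 h
  · intro h
    exact Or.inr (mem_WLset.2 h)

lemma WRset_eq_WLset (u : W) : WRset u = WLset u := by
  unfold WRset WLset
  rw [add_comm ({u} : Set W) Set.univ]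

lemma mem_Hclass {u v : W} : v ∈ Hclass u ↔ WLset u = WLset v := by
  simp [Hclass, WRset_eq_WLset]

lemma WL_act {e x : W} (hee : e + e = e) (hx : x ∈ WLset e) : e + x = x := by
  rcases mem_WLset.1 hx with h1 | ⟨w, h1⟩
  · rw [h1]; exact hee
  · rw [← h1, ← add_assoc, add_comm e w, add_assoc, hee]

lemma H_act {e x : W} (hee : e + e = e) (hx : x ∈ Hclass e) : e + x = x :=
  WL_act hee (by rw [mem_Hclass] at hx; rw [hx]; exact mem_WLset.2 (Or.inl rfl))

lemma H_inv {e x : W} (hee : e + e = e) (hx : x ∈ Hclass e) :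
    ∃ y ∈ Hclass e, x + y = e := by
  have hWL : WLset e = WLset x := mem_Hclass.1 hx
  have hex : e + x = x := H_act hee hx
  have heWx : e ∈ WLset x := by rw [← hWL]; exact mem_WLset.2 (Or.inl rfl)
  rcases mem_WLset.1 heWx with h0 | ⟨w, hw⟩
  · refine ⟨x, hx, ?_⟩
    rw [← h0]; exact hee
  · have hxx' : x + (e + w) = e := by
      rw [add_comm e w, ← add_assoc, add_comm x w, hw, hee]
    refine ⟨e + w, mem_Hclass.2 ?_, hxx'⟩
    ext y
    rw [mem_WLset, mem_WLset]
    constructor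
    · rintro (h1 | ⟨u, h1⟩)
      · exact Or.inr ⟨x, by rw [h1]; exact hxx'⟩
      · exact Or.inr ⟨u + x, by rw [add_assoc, hxx']; exact h1⟩
    · rintro (h1 | ⟨u, h1⟩)
      · exact Or.inr ⟨w, by rw [h1, add_comm]⟩
      · exact Or.inr ⟨u + w, by rw [← h1, add_assoc, add_comm w e]⟩

lemma H_closed {e x y : W} (hee : e + e = e) (hx : x ∈ Hclass e) (hy : y ∈ Hclass e) :
    x + y ∈ Hclass e := by
  obtain ⟨x', hx', hxx'⟩ := H_inv hee hx
  obtain ⟨y', hy', hyy'⟩ := H_inv hee hy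
  have key : (x' + y') + (x + y) = e := by
    rw [add_add_add_comm, add_comm x' x, add_comm y' y, hxx', hyy', hee]
  have hWLy : WLset e = WLset y := mem_Hclass.1 hy
  refine mem_Hclass.2 ?_
  ext z
  rw [mem_WLset, mem_WLset]
  constructor
  · rintro (h1 | ⟨u, h1⟩)
    · exact Or.inr ⟨x' + y', by rw [h1]; exact key⟩
    · exact Or.inr ⟨u + (x' + y'), by rw [add_assoc, key]; exact h1⟩
  · rintro (h1 | ⟨u, h1⟩)
    · have : x + y ∈ WLset y := mem_WLset.2 (Or.inr ⟨x, rfl⟩)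
      rw [← hWLy, mem_WLset] at this
      rw [h1]; exact this
    · have : u + (x + y) ∈ WLset y := mem_WLset.2 (Or.inr ⟨u + x, by rw [add_assoc]⟩)
      rw [← hWLy, mem_WLset] at this
      rw [← h1]; exact this

lemma H_group {e : W} (hee : e + e = e) : IsGroupOn (Hclass e) := by
  refine ⟨fun a ha b hb => H_closed hee ha hb, e, mem_Hclass.2 rfl, ?_, ?_⟩
  · intro a ha
    exact ⟨by rw [add_comm]; exact H_act hee ha, H_act hee ha⟩
  · intro a ha
    obtain ⟨b, hb, hab⟩ := H_inv hee ha
    exact ⟨b, hb, hab, by rw [add_comm]; exact hab⟩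

lemma H_sub {A : Set W} (hA : IsIdealSG A) {e : W} (heA : e ∉ A) :
    Hclass e ⊆ WIset e \ A := by
  intro x hx
  have hWL : WLset e = WLset x := mem_Hclass.1 hx
  constructor
  · refine mem_WIset.2 (mem_WLset.1 ?_)
    rw [hWL]; exact mem_WLset.2 (Or.inl rfl)
  · intro hxA
    have heWx : e ∈ WLset x := by rw [← hWL]; exact mem_WLset.2 (Or.inl rfl)
    rcases mem_WLset.1 heWx with h0 | ⟨w, hw⟩
    · exact heA (h0 ▸ hxA)
    · exact heA (hw ▸ hA.1 (Set.add_mem_add (Set.mem_univ w) hxA))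

end Aux

theorem group_iff_intersection {W : Type*} [AddCommSemigroup W] (A : Set W)
    (hA : IsIdealSG A) (e : W) (he : e ∈ Pset A) :
    IsGroupOn (WIset e \ A) ↔
      WIset e ∩ A = WIset e ∩ ⋃ f ∈ Pset A, (WIset f \ Hclass f) := by
  obtain ⟨⟨hee, heA⟩, hprim⟩ := he
  have hee' : e + e = e := hee
  constructor
  · -- forward
    intro hG
    obtain ⟨hcl, ε, hεG, hid, hinv⟩ := hG
    have hεε : ε + ε = ε := (hid ε hεG).1
    have hεe : ε = e := by
      rcases mem_WIset.1 hεG.1 with h | ⟨w, hw⟩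
      · exact h
      · have h1 : e + ε = ε := by rw [← hw, ← add_assoc, add_comm e w, add_assoc, hee']
        rcases hprim ε hεε ⟨h1, by rw [add_comm]; exact h1⟩ with h | h
        · exact h
        · exact absurd h hεG.2
    rw [hεe] at hid hinv
    -- G ⊆ Hclass e
    have hGH : WIset e \ A ⊆ Hclass e := by
      intro x hx
      have hxe : x + e = x := (hid x hx).1
      obtain ⟨x', _, hxx', -⟩ := hinv x hx
      refine mem_Hclass.2 ?_
      ext z
      rw [mem_WLset, mem_WLset]
      constructor
      · rintro (h1 | ⟨u, h1⟩)
        · exact Or.inr ⟨x', by rw [h1, add_comm]; exact hxx'⟩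
        · exact Or.inr ⟨u + x', by rw [add_assoc, add_comm x' x, hxx']; exact h1⟩
      · rintro (h1 | ⟨u, h1⟩)
        · exact Or.inr ⟨x, by rw [h1]; exact hxe⟩
        · exact Or.inr ⟨u + x, by rw [add_assoc, hxe]; exact h1⟩
    ext x
    simp only [Set.mem_inter_iff, Set.mem_iUnion, exists_prop]
    constructor
    · rintro ⟨hxI, hxA⟩
      refine ⟨hxI, e, ⟨⟨hee, heA⟩, hprim⟩, hxI, fun hxH => ?_⟩
      exact (H_sub hA heA hxH).2 hxA
    · rintro ⟨hxI, f, hf, hxIf, hxHf⟩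
      refine ⟨hxI, ?_⟩
      by_contra hxA
      have hxHe : x ∈ Hclass e := hGH ⟨hxI, hxA⟩
      obtain ⟨⟨hff, hfA⟩, hfprim⟩ := hf
      have hff' : f + f = f := hff
      rcases mem_WIset.1 hxIf with h0 | ⟨w, hw⟩
      · exact hxHf (h0 ▸ mem_Hclass.2 rfl)
      · have hg : (e + f) + (e + f) = e + f := by
          rw [add_add_add_comm, hee', hff']
        have hge : e + (e + f) = e + f := by rw [← add_assoc, hee']
        rcases hprim (e + f) hg ⟨hge, by rw [add_comm]; exact hge⟩ with hgeq | hgA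
        · have hfe : f + e = e := by rw [add_comm]; exact hgeq
          rcases hfprim e hee ⟨hfe, hgeq⟩ with hef | heA'
          · exact hxHf (hef ▸ hxHe)
          · exact heA heA'
        · have hxw : w + (e + f) = x := by
            rw [add_comm e f, ← add_assoc, hw, add_comm]
            exact H_act hee' hxHe
          exact hxA (hxw ▸ hA.1 (Set.add_mem_add (Set.mem_univ w) hgA))
  · -- backward
    intro hEq
    have hGH : WIset e \ A = Hclass e := by
      apply Set.Subset.antisymm _ (H_sub hA heA)
      intro x hx
      by_contra hxH
      have hmem : x ∈ WIset e ∩ ⋃ f ∈ Pset A, (WIset f \ Hclass f) := by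
        simp only [Set.mem_inter_iff, Set.mem_iUnion, exists_prop]
        exact ⟨hx.1, e, ⟨⟨hee, heA⟩, hprim⟩, hx.1, hxH⟩
      rw [← hEq] at hmem
      exact hx.2 hmem.2
    rw [hGH]
    exact H_group hee'
end

section
/- Let (W,+) be a semigroup. Then A(W) and A_s(W) are bottleneck ideals of (W,+): for every ideal D of (W,+) one has D ⊆ A(W) or A(W) ⊆ D, and likewise D ⊆ A_s(W) or A_s(W) ⊆ D. -/
open Pointwise

section Aux

variable {W : Type*} [AddSemigroup W]

lemma mem_idealL {D : Set W} (h : IsIdealSG D) {d : W} (hd : d ∈ D) (w : W) :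
    w + d ∈ D := h.1 (Set.add_mem_add (Set.mem_univ w) hd)

lemma mem_idealR {D : Set W} (h : IsIdealSG D) {d : W} (hd : d ∈ D) (w : W) :
    d + w ∈ D := h.2 (Set.add_mem_add hd (Set.mem_univ w))

lemma Ele_trans {α f g : W} (hg : g ∈ Ele f) (hf : f ∈ Ele α) : g ∈ Ele α := by
  obtain ⟨hgE, h1, h2⟩ := hg
  obtain ⟨hfE, h3, h4⟩ := hf
  exact ⟨hgE, by rw [← h1, ← add_assoc, h3], by rw [← h2, add_assoc, h4]⟩

lemma Ele_subset_AW {α : W} (hα : α ∈ AW W) : Ele α ⊆ AW W := by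
  obtain ⟨⟨hαE, hlin⟩, habs⟩ := hα
  intro f hf
  have hfα := hf
  obtain ⟨hfE, h3, h4⟩ := hf
  refine ⟨⟨hfE, fun g hg h hh => hlin g (Ele_trans hg hfα) h (Ele_trans hh hfα)⟩, ?_⟩
  intro w hw
  by_cases hwα : w ∈ Ele α
  · rcases hlin w hwα f hfα with h | h
    · exact absurd ⟨hwα.1, h⟩ hw
    · exact h
  · obtain ⟨h1, h2⟩ := habs w hwα
    constructor
    · rw [← h3, ← add_assoc, h1]
    · rw [← h4, add_assoc, h2]

lemma AW_ideal : IsIdealSG (AW W) := by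
  constructor
  · rintro x hx
    rw [Set.mem_add] at hx
    obtain ⟨w, -, α, hα, rfl⟩ := hx
    by_cases hw : w ∈ Ele α
    · rw [hw.2.2]; exact Ele_subset_AW hα hw
    · rw [(hα.2 w hw).1]; exact hα
  · rintro x hx
    rw [Set.mem_add] at hx
    obtain ⟨α, hα, w, -, rfl⟩ := hx
    by_cases hw : w ∈ Ele α
    · rw [hw.2.1]; exact Ele_subset_AW hα hw
    · rw [(hα.2 w hw).2]; exact hα

lemma AW_bottleneck : IsBottleneck (AW W) := by
  refine ⟨AW_ideal, fun D hD => ?_⟩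
  by_cases h : AW W ⊆ D
  · exact Or.inr h
  · left
    rw [Set.not_subset] at h
    obtain ⟨α, hα, hαD⟩ := h
    intro d hd
    by_cases hdα : d ∈ Ele α
    · exact Ele_subset_AW hα hdα
    · have : α ∈ D := by rw [← (hα.2 d hdα).1]; exact mem_idealR hD hd α
      exact absurd this hαD

lemma Abar_absorb : ∀ n : ℕ, ∀ w ∈ Abar W n, ∀ α ∉ Abar W n,
    α + w = w ∧ w + α = w := by
  intro n
  induction n with
  | zero => intro w hw; exact absurd hw (Set.notMem_empty w)
  | succ k ih =>
    intro w hw α hα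
    have hαk : α ∉ Abar W k := fun h => hα (Set.mem_union_left _ h)
    rcases hw with hw | hw
    · exact ih w hw α hαk
    · exact hw.2 α hαk

lemma Abar_add_mem : ∀ n : ℕ, ∀ x ∈ Abar W n, ∀ w : W,
    w + x ∈ Abar W n ∧ x + w ∈ Abar W n := by
  intro n
  induction n with
  | zero => intro x hx; exact absurd hx (Set.notMem_empty x)
  | succ k ih =>
    intro x hx w
    rcases hx with hx | hx
    · exact ⟨Set.mem_union_left _ (ih x hx w).1, Set.mem_union_left _ (ih x hx w).2⟩
    · by_cases hw : w ∈ Abar W k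
      · obtain ⟨h1, h2⟩ := Abar_absorb k w hw x hx.1
        constructor
        · rw [h2]; exact Set.mem_union_left _ hw
        · rw [h1]; exact Set.mem_union_left _ hw
      · obtain ⟨h1, h2⟩ := hx.2 w hw
        constructor
        · rw [h1]; exact Set.mem_union_right _ hx
        · rw [h2]; exact Set.mem_union_right _ hx

lemma Abar_subset_As : ∀ n : ℕ, Abar W n ⊆ As W := by
  intro n
  induction n with
  | zero => exact Set.empty_subset _
  | succ k ih =>
    rintro x (hx | hx)
    · exact ih hx
    · exact ⟨k + 1, hx⟩

lemma As_ideal : IsIdealSG (As W) := by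
  constructor
  · rintro x hx
    rw [Set.mem_add] at hx
    obtain ⟨w, -, α, ⟨n, hn⟩, rfl⟩ := hx
    cases n with
    | zero => exact absurd hn (Set.notMem_empty α)
    | succ k =>
      exact Abar_subset_As (k + 1)
        (Abar_add_mem (k + 1) α (Set.mem_union_right _ hn) w).1
  · rintro x hx
    rw [Set.mem_add] at hx
    obtain ⟨α, ⟨n, hn⟩, w, -, rfl⟩ := hx
    cases n with
    | zero => exact absurd hn (Set.notMem_empty α)
    | succ k =>
      exact Abar_subset_As (k + 1)
        (Abar_add_mem (k + 1) α (Set.mem_union_right _ hn) w).2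

lemma As_bottleneck : IsBottleneck (As W) := by
  refine ⟨As_ideal, fun D hD => ?_⟩
  by_cases h : As W ⊆ D
  · exact Or.inr h
  · left
    rw [Set.not_subset] at h
    obtain ⟨α, ⟨n, hn⟩, hαD⟩ := h
    cases n with
    | zero => exact absurd hn (Set.notMem_empty α)
    | succ k =>
      intro d hd
      by_cases hdk : d ∈ Abar W k
      · exact Abar_subset_As k hdk
      · have : α ∈ D := by rw [← (hn.2 d hdk).1]; exact mem_idealR hD hd α
        exact absurd this hαD

end Aux

theorem AW_As_bottleneck {W : Type*} [AddSemigroup W] :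
    IsBottleneck (AW W) ∧ IsBottleneck (As W) :=
  ⟨AW_bottleneck, As_bottleneck⟩
end
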